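/- Let f : [0,1] → [0,1] be convex, monotone increasing and twice continuously differentiable, with f(1) = 1, f(0) > 0, and 0 < f'(1) < 1. Then f^∘n(0) < 1 for all n ≥ 0, and the limit lim_{n→∞} (1 − f^∘n(0)) / f'(1)^n exists, is finite, and is strictly positive. -/

import Mathlib

open Set Filter Topology

lemma myAbsLog {x : ℝ} (h : |x| ≤ 1/2) : |Real.log (1+x)| ≤ 2*|x| := by
  obtain ⟨hl, hr⟩ := abs_le.1 h
  have h1 : (0:ℝ) < 1 + x := by linarith
  rw [abs_le]
  constructor
  · have h2 := Real.log_le_sub_one_of_pos (x := (1+x)⁻¹) (by positivity)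
    rw [Real.log_inv] at h2
    have h3 : x / (1+x) ≤ Real.log (1+x) := by
      have he : 1 - (1+x)⁻¹ = x / (1+x) := by field_simp; ring
      linarith [he ▸ (by linarith : 1 - (1+x)⁻¹ ≤ Real.log (1+x))]
    rcases le_or_gt 0 x with hx | hx
    · have h4 : 0 ≤ x / (1+x) := by positivity
      have h5 : 0 ≤ 2*|x| := by positivity
      linarith
    · rw [abs_of_neg hx]
      have h4 : 2*x ≤ x / (1+x) := by
        rw [le_div_iff₀ h1]
        nlinarith
      linarith
  · have h2 := Real.log_le_sub_one_of_pos h1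
    have h3 := le_abs_self x
    have h4 := abs_nonneg x
    linarith

/-- For f : [0,1] → [0,1] convex, monotone increasing, twice
continuously differentiable on [0,1], with f(1) = 1, f(0) > 0 and 0 < f'(1) < 1,
all iterates satisfy f^∘n(0) < 1 and the limit lim_n (1 − f^∘n(0))/f'(1)^n exists,
is finite and strictly positive (Joffe's argument). -/
theorem coalescence_stmt10 (f f' f'' : ℝ → ℝ)
    (hconv : ConvexOn ℝ (Icc 0 1) f)
    (hmono : MonotoneOn f (Icc 0 1))
    (hmap : MapsTo f (Icc 0 1) (Icc 0 1))
    (hf' : ∀ s ∈ Icc (0:ℝ) 1, HasDerivWithinAt f (f' s) (Icc 0 1) s)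
    (hf'' : ∀ s ∈ Icc (0:ℝ) 1, HasDerivWithinAt f' (f'' s) (Icc 0 1) s)
    (hcont : ContinuousOn f'' (Icc 0 1))
    (hf1 : f 1 = 1) (hf0 : 0 < f 0)
    (hd0 : 0 < f' 1) (hd1 : f' 1 < 1) :
    (∀ n : ℕ, f^[n] 0 < 1) ∧
      ∃ L : ℝ, 0 < L ∧
        Tendsto (fun n : ℕ => (1 - f^[n] 0) / (f' 1) ^ n) atTop (𝓝 L) := by
  have h01 : (0:ℝ) ∈ Icc (0:ℝ) 1 := ⟨le_refl 0, zero_le_one⟩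
  have h11 : (1:ℝ) ∈ Icc (0:ℝ) 1 := ⟨zero_le_one, le_refl 1⟩
  set m : ℝ := f' 1 with hm
  -- iterates stay in [0,1]
  have hqmem : ∀ n : ℕ, f^[n] 0 ∈ Icc (0:ℝ) 1 := by
    intro n; induction n with
    | zero => simpa using h01
    | succ n ih => rw [Function.iterate_succ_apply']; exact hmap ih
  -- f x < 1 for x < 1
  have hlt1 : ∀ x ∈ Icc (0:ℝ) 1, x < 1 → f x < 1 := by
    intro x hx hx1
    rcases lt_or_eq_of_le (hmap hx).2 with h | h
    · exact h
    exfalso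
    have hconst : ∀ y ∈ Icc x 1, f y = (fun _ : ℝ => (1:ℝ)) y := by
      intro y hy
      have hy01 : y ∈ Icc (0:ℝ) 1 := ⟨le_trans hx.1 hy.1, hy.2⟩
      exact le_antisymm (hmap hy01).2 (h ▸ hmono hx hy01 hy.1)
    have hev : f =ᶠ[𝓝[Icc (0:ℝ) 1] 1] fun _ => (1:ℝ) := by
      have hIci : Ici x ∈ 𝓝[Icc (0:ℝ) 1] (1:ℝ) :=
        nhdsWithin_le_nhds (Ici_mem_nhds hx1)
      filter_upwards [hIci, self_mem_nhdsWithin] with y hy hy'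
      exact hconst y ⟨hy, hy'.2⟩
    have hd : HasDerivWithinAt f 0 (Icc (0:ℝ) 1) 1 :=
      (hasDerivWithinAt_const (1:ℝ) (Icc (0:ℝ) 1) (1:ℝ)).congr_of_eventuallyEq hev hf1
    have : f' 1 = 0 := (uniqueDiffOn_Icc one_pos 1 h11).eq_deriv _ (hf' 1 h11) hd
    rw [← hm] at this
    exact absurd this (ne_of_gt hd0)
  have hqlt : ∀ n : ℕ, f^[n] 0 < 1 := by
    intro n; induction n with
    | zero => simpa using one_pos
    | succ n ih =>
      rw [Function.iterate_succ_apply']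
      exact hlt1 _ (hqmem n) ih
  refine ⟨hqlt, ?_⟩
  -- key inequality (i): 1 - f x ≤ m (1 - x)
  have key1 : ∀ x ∈ Icc (0:ℝ) 1, 1 - f x ≤ m * (1 - x) := by
    intro x hx
    rcases eq_or_lt_of_le hx.2 with rfl | hx1
    · simp [hf1]
    have htends : Tendsto (slope f 1) (𝓝[Icc (0:ℝ) 1 \ {1}] 1) (𝓝 m) :=
      hasDerivWithinAt_iff_tendsto_slope.1 (hf' 1 h11)
    have hNB : (𝓝[Icc (0:ℝ) 1 \ {1}] (1:ℝ)).NeBot := by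
      rw [Icc_sdiff_right, nhdsWithin_Ico_eq_nhdsLT one_pos]
      infer_instance
    have hslope : slope f 1 x ≤ m := by
      refine ge_of_tendsto htends ?_
      have hIoi : Ioi x ∈ 𝓝[Icc (0:ℝ) 1 \ {1}] (1:ℝ) :=
        nhdsWithin_le_nhds (Ioi_mem_nhds hx1)
      filter_upwards [hIoi, self_mem_nhdsWithin] with y hy hy'
      have := hconv.secant_mono h11 hx ⟨hy'.1.1, hy'.1.2⟩ (ne_of_lt hx1)
        hy'.2 (le_of_lt hy)
      simpa [slope_def_field, div_eq_mul_inv] using this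
    have h2 : (f x - f 1) / (x - 1) ≤ m := by
      simpa [slope_def_field] using hslope
    rw [div_le_iff_of_neg (by linarith : x - 1 < 0)] at h2
    rw [hf1] at h2
    nlinarith
  -- bound on f''
  obtain ⟨C₀, hC₀⟩ := isCompact_Icc.exists_bound_of_continuousOn hcont
  set C : ℝ := max C₀ 0 with hCdef
  have hC : ∀ y ∈ Icc (0:ℝ) 1, |f'' y| ≤ C := fun y hy =>
    le_trans (hC₀ y hy) (le_max_left _ _)
  have hCnn : 0 ≤ C := le_max_right _ _
  -- step 1: |f' 1 - f' y| ≤ C (1-y)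
  have hstep1 : ∀ y ∈ Icc (0:ℝ) 1, |f' 1 - f' y| ≤ C * (1 - y) := by
    intro y hy
    have hsub : Icc y 1 ⊆ Icc (0:ℝ) 1 := Icc_subset_Icc hy.1 le_rfl
    have := norm_image_sub_le_of_norm_deriv_le_segment'
      (f := f') (f' := f'') (C := C) (a := y) (b := 1)
      (fun z hz => (hf'' z (hsub hz)).mono hsub)
      (fun z hz => hC z (hsub (Ico_subset_Icc_self hz))) 1 ⟨hy.2, le_rfl⟩
    simpa using this
  -- step 2: |(1 - f x) - m(1-x)| ≤ C (1-x)(1-x)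
  have hstep2 : ∀ x ∈ Icc (0:ℝ) 1, |(1 - f x) - m * (1 - x)| ≤ C * (1 - x) * (1 - x) := by
    intro x hx
    have hsub : Icc x 1 ⊆ Icc (0:ℝ) 1 := Icc_subset_Icc hx.1 le_rfl
    have hφ : ∀ z ∈ Icc x 1, HasDerivWithinAt (fun y => f y - m * y) (f' z - m) (Icc x 1) z := by
      intro z hz
      have h1 := ((hf' z (hsub hz)).mono hsub).sub
        ((hasDerivWithinAt_id z (Icc x 1)).const_mul m)
      have h2 : HasDerivWithinAt (fun y => f y - m * y) (f' z - m * 1) (Icc x 1) z := h1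
      simpa using h2
    have hbd : ∀ z ∈ Ico x 1, ‖f' z - m‖ ≤ C * (1 - x) := by
      intro z hz
      have h1 := hstep1 z (hsub (Ico_subset_Icc_self hz))
      have h2 : |f' z - m| = |f' 1 - f' z| := by rw [← hm, abs_sub_comm]
      have h3 : C * (1 - z) ≤ C * (1 - x) := by
        apply mul_le_mul_of_nonneg_left _ hCnn
        linarith [hz.1]
      calc ‖f' z - m‖ = |f' 1 - f' z| := h2
        _ ≤ C * (1 - z) := h1
        _ ≤ C * (1 - x) := h3
    have := norm_image_sub_le_of_norm_deriv_le_segment'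
      (f := fun y => f y - m * y) (f' := fun z => f' z - m) (C := C * (1 - x))
      (a := x) (b := 1) hφ hbd 1 ⟨hx.2, le_rfl⟩
    have heq : (f 1 - m * 1) - (f x - m * x) = (1 - f x) - m * (1 - x) := by
      rw [hf1]; ring
    calc |(1 - f x) - m * (1 - x)| = ‖(f 1 - m * 1) - (f x - m * x)‖ := by
          rw [heq]; rfl
      _ ≤ C * (1 - x) * (1 - x) := this
  -- the sequence e n
  set e : ℕ → ℝ := fun n => 1 - f^[n] 0 with he
  have he_pos : ∀ n, 0 < e n := fun n => by simp only [he]; linarith [hqlt n]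
  have he_succ : ∀ n, e (n+1) = 1 - f (f^[n] 0) := by
    intro n; simp only [he, Function.iterate_succ_apply']
  have he_rec_le : ∀ n, e (n+1) ≤ m * e n := by
    intro n; rw [he_succ n]; exact key1 _ (hqmem n)
  have he_le : ∀ n, e n ≤ m ^ n := by
    intro n; induction n with
    | zero => simp [he]
    | succ n ih =>
      calc e (n+1) ≤ m * e n := he_rec_le n
        _ ≤ m * m ^ n := mul_le_mul_of_nonneg_left ih (le_of_lt hd0)
        _ = m ^ (n+1) := (pow_succ' m n).symm
  have habs : ∀ n, |e (n+1) - m * e n| ≤ C * e n * e n := by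
    intro n
    have := hstep2 _ (hqmem n)
    rw [he_succ n]
    simpa only [he] using this
  -- delta
  set δ : ℕ → ℝ := fun n => e (n+1) / (m * e n) - 1 with hδ
  have hmen : ∀ n, (0:ℝ) < m * e n := fun n => mul_pos hd0 (he_pos n)
  have h1δ : ∀ n, 1 + δ n = e (n+1) / (m * e n) := fun n => by simp [hδ]
  have h1δpos : ∀ n, 0 < 1 + δ n := fun n => by
    rw [h1δ n]; exact div_pos (he_pos (n+1)) (hmen n)
  have hδeq : ∀ n, δ n = (e (n+1) - m * e n) / (m * e n) := by
    intro n
    rw [sub_div, div_self (ne_of_gt (hmen n))]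
  have hδbd : ∀ n, |δ n| ≤ C / m * m ^ n := by
    intro n
    rw [hδeq n, abs_div, abs_of_pos (hmen n)]
    calc |e (n+1) - m * e n| / (m * e n) ≤ (C * e n * e n) / (m * e n) := by
          exact (div_le_div_iff_of_pos_right (hmen n)).2 (habs n)
      _ = C / m * e n := by
          rw [eq_comm, div_mul_eq_mul_div, div_eq_div_iff (ne_of_gt hd0) (ne_of_gt (hmen n))]
          ring
      _ ≤ C / m * m ^ n := by
          apply mul_le_mul_of_nonneg_left (he_le n) (div_nonneg hCnn (le_of_lt hd0))
  -- a n
  set a : ℕ → ℝ := fun n => e n / m ^ n with ha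
  have ha_pos : ∀ n, 0 < a n := fun n => div_pos (he_pos n) (pow_pos hd0 n)
  have ha_rec : ∀ n, a (n+1) = a n * ((1:ℝ) + δ n) := by
    intro n
    have h2 : (0:ℝ) < m ^ (n+1) := pow_pos hd0 _
    have h3 : (0:ℝ) < m ^ n * (m * e n) := mul_pos (pow_pos hd0 n) (hmen n)
    rw [h1δ n]
    show e (n+1) / m ^ (n+1) = e n / m ^ n * (e (n+1) / (m * e n))
    rw [div_mul_div_comm, div_eq_div_iff (ne_of_gt h2) (ne_of_gt h3), pow_succ]
    ring
  have hlog : ∀ n, Real.log (a n) =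
      Real.log (a 0) + ∑ i ∈ Finset.range n, Real.log (1 + δ i) := by
    intro n; induction n with
    | zero => simp
    | succ n ih =>
      rw [ha_rec n, Real.log_mul (ne_of_gt (ha_pos n)) (ne_of_gt (h1δpos n)),
        Finset.sum_range_succ, ih]
      ring
  -- summability of logs
  have hgeo : Summable (fun n : ℕ => 2 * (C / m) * m ^ n) :=
    (summable_geometric_of_lt_one (le_of_lt hd0) hd1).mul_left _
  have hδto0 : Tendsto (fun n : ℕ => C / m * m ^ n) atTop (𝓝 0) := by
    have := tendsto_pow_atTop_nhds_zero_of_lt_one (le_of_lt hd0) hd1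
    simpa using this.const_mul (C / m)
  have hsmall : ∀ᶠ n in atTop, |δ n| ≤ 1/2 := by
    have : ∀ᶠ n in atTop, C / m * m ^ n < 1/2 :=
      hδto0.eventually (eventually_lt_nhds (by norm_num : (0:ℝ) < 1/2))
    filter_upwards [this] with n hn
    exact le_of_lt (lt_of_le_of_lt (hδbd n) hn)
  have hsum : Summable (fun n => Real.log (1 + δ n)) := by
    apply Summable.of_norm_bounded_eventually_nat hgeo
    filter_upwards [hsmall] with n hn
    calc ‖Real.log (1 + δ n)‖ = |Real.log (1 + δ n)| := rfl
      _ ≤ 2 * |δ n| := myAbsLog hn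
      _ ≤ 2 * (C / m * m ^ n) := by linarith [hδbd n]
      _ = 2 * (C / m) * m ^ n := by ring
  have hpartial : Tendsto (fun n => ∑ i ∈ Finset.range n, Real.log (1 + δ i))
      atTop (𝓝 (∑' i, Real.log (1 + δ i))) := hsum.hasSum.tendsto_sum_nat
  set S := ∑' i, Real.log (1 + δ i) with hS
  refine ⟨Real.exp (Real.log (a 0) + S), Real.exp_pos _, ?_⟩
  have haexp : ∀ n, a n = Real.exp (Real.log (a 0) +
      ∑ i ∈ Finset.range n, Real.log (1 + δ i)) := by
    intro n
    rw [← hlog n, Real.exp_log (ha_pos n)]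
  have htend : Tendsto a atTop (𝓝 (Real.exp (Real.log (a 0) + S))) := by
    have h1 : Tendsto (fun n => Real.log (a 0) +
        ∑ i ∈ Finset.range n, Real.log (1 + δ i)) atTop (𝓝 (Real.log (a 0) + S)) :=
      tendsto_const_nhds.add hpartial
    have h2 := (Real.continuous_exp.tendsto _).comp h1
    refine h2.congr fun n => (haexp n).symm
  exact htend
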